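/- Let X be a topological space and let P₁ and P₂ be two partitions of X into subsets each of which is locally connected in its subspace topology. Let P₁ᶜ and P₂ᶜ denote the partitions of X obtained by replacing each member by its connected components. Then P₁ᶜ = P₂ᶜ if and only if every x ∈ X admits an open neighbourhood U in X such that P₁(x) ∩ U = P₂(x) ∩ U, where Pᵢ(x) denotes the member of Pᵢ containing x. -/
import Mathlib

lemma stmt15_open {X : Type*} [TopologicalSpace X] (T : Set X) [LocallyConnectedSpace T]
    {x : X} (hx : x ∈ T) :
    ∃ V : Set X, IsOpen V ∧ connectedComponentIn T x = T ∩ V := by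
  have h := connectedComponentIn_eq_image hx
  have hop : IsOpen (connectedComponent (⟨x, hx⟩ : T)) := isOpen_connectedComponent
  rw [isOpen_induced_iff] at hop
  obtain ⟨V, hV, hVe⟩ := hop
  refine ⟨V, hV, ?_⟩
  rw [h, ← hVe]
  ext y
  simp only [Set.mem_image, Set.mem_preimage, Set.mem_inter_iff]
  constructor
  · rintro ⟨⟨z, hz⟩, hzV, rfl⟩; exact ⟨hz, hzV⟩
  · rintro ⟨hyT, hyV⟩; exact ⟨⟨y, hyT⟩, hyV, rfl⟩

lemma stmt15_uniq {X : Type*} {R : Set (Set X)} (hR : Setoid.IsPartition R) {A B : Set X}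
    (hA : A ∈ R) (hB : B ∈ R) {y : X} (hyA : y ∈ A) (hyB : y ∈ B) : A = B := by
  obtain ⟨E, _, hEu⟩ := hR.2 y
  rw [hEu A ⟨hA, hyA⟩, hEu B ⟨hB, hyB⟩]

lemma stmt15_sub {X : Type*} [TopologicalSpace X] {P Q : Set (Set X)}
    (hP : Setoid.IsPartition P) (hQ : Setoid.IsPartition Q)
    (hloc : ∀ x : X, ∃ U : Set X, IsOpen U ∧ x ∈ U ∧
      ∀ T ∈ P, ∀ S ∈ Q, x ∈ T → x ∈ S → T ∩ U = S ∩ U)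
    {T S : Set X} (hT : T ∈ P) (hS : S ∈ Q) {x : X} (hxT : x ∈ T) (hxS : x ∈ S) :
    connectedComponentIn T x ⊆ connectedComponentIn S x := by
  set C := connectedComponentIn T x with hC
  have hCT : C ⊆ T := connectedComponentIn_subset T x
  have hxC : x ∈ C := mem_connectedComponentIn hxT
  have hpre : IsPreconnected C := isPreconnected_connectedComponentIn
  choose U hUo hUm hUeq using hloc
  have hQmem : ∀ y : X, ∃ S' ∈ Q, y ∈ S' := fun y => by
    obtain ⟨S', ⟨hS'Q, hyS'⟩, _⟩ := hQ.2 y; exact ⟨S', hS'Q, hyS'⟩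
  have key : C ⊆ S := by
    set V : Set X := ⋃ y ∈ C ∩ S, U y with hV
    set W : Set X := ⋃ y ∈ C \ S, U y with hW
    have hVo : IsOpen V := isOpen_biUnion fun y _ => hUo y
    have hWo : IsOpen W := isOpen_biUnion fun y _ => hUo y
    have hVS : C ∩ V ⊆ S := by
      rintro z ⟨hzC, hzV⟩
      obtain ⟨y, hy, hzU⟩ := Set.mem_iUnion₂.1 hzV
      have heq := hUeq y T hT S hS (hCT hy.1) hy.2
      have : z ∈ T ∩ U y := ⟨hCT hzC, hzU⟩
      rw [heq] at this; exact this.1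
    have hWS : C ∩ W ⊆ Sᶜ := by
      rintro z ⟨hzC, hzW⟩
      obtain ⟨y, hy, hzU⟩ := Set.mem_iUnion₂.1 hzW
      obtain ⟨S', hS'Q, hyS'⟩ := hQmem y
      have heq := hUeq y T hT S' hS'Q (hCT hy.1) hyS'
      have hzS' : z ∈ S' := by
        have : z ∈ T ∩ U y := ⟨hCT hzC, hzU⟩
        rw [heq] at this; exact this.1
      intro hzS
      have : S' = S := stmt15_uniq hQ hS'Q hS hzS' hzS
      exact hy.2 (this ▸ hyS')
    have hcover : C ⊆ V ∪ W := by
      intro z hz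
      by_cases hzS : z ∈ S
      · exact Or.inl (Set.mem_biUnion ⟨hz, hzS⟩ (hUm z))
      · exact Or.inr (Set.mem_biUnion ⟨hz, hzS⟩ (hUm z))
    by_contra hnot
    obtain ⟨w, hwC, hwS⟩ := Set.not_subset.mp hnot
    have hne : (C ∩ (V ∩ W)).Nonempty :=
      hpre V W hVo hWo hcover
        ⟨x, hxC, Set.mem_biUnion ⟨hxC, hxS⟩ (hUm x)⟩
        ⟨w, hwC, Set.mem_biUnion ⟨hwC, hwS⟩ (hUm w)⟩
    obtain ⟨z, hzC, hzV, hzW⟩ := hne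
    exact hWS ⟨hzC, hzW⟩ (hVS ⟨hzC, hzV⟩)
  exact IsPreconnected.subset_connectedComponentIn hpre hxC key

/-- Two partitions of a space into locally connected pieces induce the same partition into
connected components iff they agree locally: around every point `x` there is an open `U` on
which the members through `x` coincide. -/
theorem stmt15 {X : Type*} [TopologicalSpace X] (P₁ P₂ : Set (Set X))
    (h₁ : Setoid.IsPartition P₁) (h₂ : Setoid.IsPartition P₂)
    (hlc₁ : ∀ T ∈ P₁, LocallyConnectedSpace T)
    (hlc₂ : ∀ T ∈ P₂, LocallyConnectedSpace T) :
    ({C : Set X | ∃ T ∈ P₁, ∃ x ∈ T, C = connectedComponentIn T x}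
        = {C : Set X | ∃ T ∈ P₂, ∃ x ∈ T, C = connectedComponentIn T x})
      ↔ ∀ x : X, ∃ U : Set X, IsOpen U ∧ x ∈ U ∧
          ∀ T₁ ∈ P₁, ∀ T₂ ∈ P₂, x ∈ T₁ → x ∈ T₂ → T₁ ∩ U = T₂ ∩ U := by
  constructor
  · intro heq x
    obtain ⟨T₁, ⟨hT₁, hxT₁⟩, _⟩ := h₁.2 x
    obtain ⟨T₂, ⟨hT₂, hxT₂⟩, _⟩ := h₂.2 x
    -- the component of x in T₁ is also a component from P₂
    have hmem : connectedComponentIn T₁ x ∈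
        {C : Set X | ∃ T ∈ P₂, ∃ y ∈ T, C = connectedComponentIn T y} := by
      rw [← heq]; exact ⟨T₁, hT₁, x, hxT₁, rfl⟩
    obtain ⟨T, hT, y, hyT, hCy⟩ := hmem
    have hxTy : x ∈ connectedComponentIn T y := by
      rw [← hCy]; exact mem_connectedComponentIn hxT₁
    have hTT₂ : T = T₂ :=
      stmt15_uniq h₂ hT hT₂ (connectedComponentIn_subset T y hxTy) hxT₂
    subst hTT₂
    have hKeq : connectedComponentIn T₁ x = connectedComponentIn T x :=
      hCy.trans (connectedComponentIn_eq hxTy)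
    haveI := hlc₁ T₁ hT₁
    haveI := hlc₂ T hT
    obtain ⟨V₁, hV₁o, hV₁⟩ := stmt15_open T₁ hxT₁
    obtain ⟨V₂, hV₂o, hV₂⟩ := stmt15_open T hxT₂
    refine ⟨V₁ ∩ V₂, hV₁o.inter hV₂o, ?_, ?_⟩
    · constructor
      · have : x ∈ T₁ ∩ V₁ := hV₁ ▸ mem_connectedComponentIn hxT₁
        exact this.2
      · have : x ∈ T ∩ V₂ := hV₂ ▸ mem_connectedComponentIn hxT₂
        exact this.2
    · intro S₁ hS₁ S₂ hS₂ hxS₁ hxS₂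
      have e₁ : S₁ = T₁ := stmt15_uniq h₁ hS₁ hT₁ hxS₁ hxT₁
      have e₂ : S₂ = T := stmt15_uniq h₂ hS₂ hT₂ hxS₂ hxT₂
      rw [e₁, e₂]
      have hK₁ : T₁ ∩ (V₁ ∩ V₂) = connectedComponentIn T₁ x ∩ V₂ := by
        rw [← Set.inter_assoc, ← hV₁]
      have hK₂ : T ∩ (V₁ ∩ V₂) = connectedComponentIn T x ∩ V₁ := by
        rw [Set.inter_comm V₁ V₂, ← Set.inter_assoc, ← hV₂]
      rw [hK₁, hK₂, hKeq]
      have hsub₂ : connectedComponentIn T x ⊆ V₂ := by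
        rw [hV₂]; exact Set.inter_subset_right
      have hsub₁ : connectedComponentIn T x ⊆ V₁ := by
        rw [← hKeq, hV₁]; exact Set.inter_subset_right
      rw [Set.inter_eq_self_of_subset_left hsub₂, Set.inter_eq_self_of_subset_left hsub₁]
  · intro hloc
    have hloc' : ∀ x : X, ∃ U : Set X, IsOpen U ∧ x ∈ U ∧
        ∀ T ∈ P₂, ∀ S ∈ P₁, x ∈ T → x ∈ S → T ∩ U = S ∩ U := by
      intro x
      obtain ⟨U, hUo, hxU, hU⟩ := hloc x
      exact ⟨U, hUo, hxU, fun T hT S hS hxT hxS => (hU S hS T hT hxS hxT).symm⟩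
    ext C
    constructor
    · rintro ⟨T, hT, x, hxT, rfl⟩
      obtain ⟨S, ⟨hS, hxS⟩, _⟩ := h₂.2 x
      refine ⟨S, hS, x, hxS, ?_⟩
      exact le_antisymm (stmt15_sub h₁ h₂ hloc hT hS hxT hxS)
        (stmt15_sub h₂ h₁ hloc' hS hT hxS hxT)
    · rintro ⟨T, hT, x, hxT, rfl⟩
      obtain ⟨S, ⟨hS, hxS⟩, _⟩ := h₁.2 x
      refine ⟨S, hS, x, hxS, ?_⟩
      exact le_antisymm (stmt15_sub h₂ h₁ hloc' hT hS hxT hxS)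
        (stmt15_sub h₁ h₂ hloc hS hT hxS hxT)
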